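/- arXiv:1304.4040 — 3 statements merged into one kernel-verified Lean document; each statement's English description precedes it below -/
import Mathlib

section
/- Let Ω be a bounded open domain in ℝ^N with smooth boundary, T > 0, 1 < p ≤ 2, and let M : [0,T]×Ω → ℝ satisfy 0 < a ≤ M(t,x) ≤ b < ∞. Suppose C > 0 is a T-independent constant such that every solution w of ∂_t w + ((a+b)/2) Δ_x w = g on [0,T]×Ω with w(T,·) = 0 and homogeneous Neumann boundary condition satisfies ‖Δ_x w‖_{L^p([0,T]×Ω)} ≤ C ‖g‖_{L^p([0,T]×Ω)}, and assume C·(b−a)/2 < 1. Then any (sufficiently regular) solution v of ∂_t v + M Δ_x v = f on [0,T]×Ω with v(T,·) = 0 and homogeneous Neumann boundary condition satisfies ‖Δ_x v‖_{L^p([0,T]×Ω)} ≤ D·‖f‖_{L^p([0,T]×Ω)}, where D = C/(1 − C·(b−a)/2). -/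
open MeasureTheory Real Set Function
open scoped ENNReal

noncomputable section

/-- The Laplacian of `f : ℝ^N → ℝ`, computed as the sum of the second partial
derivatives in the coordinate directions. -/
def lapl {N : ℕ} (f : EuclideanSpace ℝ (Fin N) → ℝ) (x : EuclideanSpace ℝ (Fin N)) : ℝ :=
  ∑ i : Fin N, fderiv ℝ (fun y => fderiv ℝ f y (EuclideanSpace.single i 1)) x
    (EuclideanSpace.single i 1)

/-- The time derivative of `u : ℝ → ℝ^N → ℝ`. -/
def tderiv {N : ℕ} (u : ℝ → EuclideanSpace ℝ (Fin N) → ℝ) (t : ℝ)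
    (x : EuclideanSpace ℝ (Fin N)) : ℝ :=
  deriv (fun s => u s x) t

/-- The natural (product Lebesgue) measure on the parabolic cylinder `[0,T] × Ω`. -/
def cylMeasure {N : ℕ} (T : ℝ) (Ω : Set (EuclideanSpace ℝ (Fin N))) :
    Measure (ℝ × EuclideanSpace ℝ (Fin N)) :=
  (volume.restrict (Icc 0 T)).prod (volume.restrict Ω)


section Aux
variable {N : ℕ}

lemma fderiv_slice (u : ℝ × EuclideanSpace ℝ (Fin N) → ℝ) (hu : Differentiable ℝ u)
    (t : ℝ) (y e : EuclideanSpace ℝ (Fin N)) :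
    fderiv ℝ (fun x => u (t, x)) y e = fderiv ℝ u (t, y) ((0 : ℝ), e) := by
  have h2 := (hu (t, y)).hasFDerivAt.comp y (hasFDerivAt_prodMk_right t y)
  have h3 := h2.fderiv
  simp only [Function.comp_def] at h3
  rw [h3]
  simp

lemma lapl_eq (v : ℝ → EuclideanSpace ℝ (Fin N) → ℝ) (hv : ContDiff ℝ 2 (uncurry v))
    (t : ℝ) (x : EuclideanSpace ℝ (Fin N)) :
    lapl (v t) x = ∑ i : Fin N,
      fderiv ℝ (fun z => fderiv ℝ (uncurry v) z ((0 : ℝ), EuclideanSpace.single i 1)) (t, x)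
        ((0 : ℝ), EuclideanSpace.single i 1) := by
  have hdu : Differentiable ℝ (uncurry v) := hv.differentiable (by norm_num)
  have hF : ∀ e, Differentiable ℝ (fun z => fderiv ℝ (uncurry v) z ((0 : ℝ), e)) := by
    intro e
    exact ((hv.fderiv_right (m := 1) (le_refl _)).clm_apply contDiff_const).differentiable one_ne_zero
  unfold lapl
  refine Finset.sum_congr rfl fun i _ => ?_
  have h1 : (fun y => fderiv ℝ (v t) y (EuclideanSpace.single i 1))
      = fun y => fderiv ℝ (uncurry v) (t, y) ((0 : ℝ), EuclideanSpace.single i 1) := by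
    funext y
    exact fderiv_slice (uncurry v) hdu t y _
  rw [h1]
  exact fderiv_slice _ (hF _) t x _

lemma cont_lapl (v : ℝ → EuclideanSpace ℝ (Fin N) → ℝ) (hv : ContDiff ℝ 2 (uncurry v)) :
    Continuous fun z : ℝ × EuclideanSpace ℝ (Fin N) => lapl (v z.1) z.2 := by
  have h : (fun z : ℝ × EuclideanSpace ℝ (Fin N) => lapl (v z.1) z.2)
      = fun z => ∑ i : Fin N,
        fderiv ℝ (fun w => fderiv ℝ (uncurry v) w ((0 : ℝ), EuclideanSpace.single i 1)) z
          ((0 : ℝ), EuclideanSpace.single i 1) := by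
    funext z
    exact lapl_eq v hv z.1 z.2
  rw [h]
  refine continuous_finset_sum _ fun i _ => ?_
  have hF : ContDiff ℝ 1 (fun z => fderiv ℝ (uncurry v) z ((0 : ℝ), EuclideanSpace.single i 1)) :=
    (hv.fderiv_right (le_refl _)).clm_apply contDiff_const
  exact (hF.continuous_fderiv one_ne_zero).clm_apply continuous_const

lemma tderiv_eq (v : ℝ → EuclideanSpace ℝ (Fin N) → ℝ) (hv : ContDiff ℝ 2 (uncurry v))
    (t : ℝ) (x : EuclideanSpace ℝ (Fin N)) :
    tderiv v t x = fderiv ℝ (uncurry v) (t, x) ((1 : ℝ), 0) := by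
  have hdu : Differentiable ℝ (uncurry v) := hv.differentiable (by norm_num)
  have h2 := (hdu (t, x)).hasFDerivAt.comp t (hasFDerivAt_prodMk_left (𝕜 := ℝ) t x)
  have : tderiv v t x = fderiv ℝ (fun s => uncurry v (s, x)) t 1 := by
    unfold tderiv
    rw [← fderiv_apply_one_eq_deriv]
    rfl
  have h3 := h2.fderiv
  simp only [Function.comp_def] at h3
  rw [this, h3]
  simp

lemma cont_tderiv (v : ℝ → EuclideanSpace ℝ (Fin N) → ℝ) (hv : ContDiff ℝ 2 (uncurry v)) :
    Continuous fun z : ℝ × EuclideanSpace ℝ (Fin N) => tderiv v z.1 z.2 := by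
  have h : (fun z : ℝ × EuclideanSpace ℝ (Fin N) => tderiv v z.1 z.2)
      = fun z => fderiv ℝ (uncurry v) z ((1 : ℝ), 0) := by
    funext z; exact tderiv_eq v hv z.1 z.2
  rw [h]
  exact (hv.continuous_fderiv (by norm_num)).clm_apply continuous_const

end Aux

/-- Lemma 2.3, first estimate.  On a bounded smooth domain
`Ω ⊂ ℝ^N` (encoded as a strict sublevel set of a `C²` function `φ` with nonvanishing
gradient on the boundary), for `1 < p ≤ 2` and `0 < a ≤ M(t,x) ≤ b`, if `C > 0` is a
T-independent `L^p` maximal regularity constant for the backward heat equation with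
diffusivity `(a+b)/2` and Neumann boundary conditions and `C (b-a)/2 < 1`, then any
sufficiently regular solution `v` of `∂ₜ v + M Δ v = f` on `[0,T] × Ω` with
`v(T,·) = 0` and Neumann boundary conditions satisfies
`‖Δv‖_{L^p(Ω_T)} ≤ D ‖f‖_{L^p(Ω_T)}` with `D = C/(1 - C (b-a)/2)`. -/
theorem stmt_2
    (N : ℕ) (Ω : Set (EuclideanSpace ℝ (Fin N))) (φ : EuclideanSpace ℝ (Fin N) → ℝ)
    (hΩopen : IsOpen Ω) (hΩbdd : Bornology.IsBounded Ω) (hΩne : Ω.Nonempty)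
    (hφ : ContDiff ℝ 2 φ) (hΩφ : Ω = {x | φ x < 0})
    (hφgrad : ∀ x ∈ frontier Ω, gradient φ x ≠ 0)
    (T : ℝ) (hT : 0 < T)
    (p : ℝ) (hp1 : 1 < p) (hp2 : p ≤ 2)
    (M : ℝ → EuclideanSpace ℝ (Fin N) → ℝ)
    (a b : ℝ) (ha : 0 < a) (hab : a ≤ b)
    (hM : ∀ t ∈ Icc (0 : ℝ) T, ∀ x ∈ Ω, a ≤ M t x ∧ M t x ≤ b)
    (C : ℝ) (hC : 0 < C)
    -- `C` is a T-independent `L^p` maximal regularity constant for the backward heat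
    -- equation with diffusivity `(a+b)/2` and Neumann boundary conditions:
    (hmaxreg : ∀ T' > (0 : ℝ), ∀ w g : ℝ → EuclideanSpace ℝ (Fin N) → ℝ,
      ContDiff ℝ 2 (uncurry w) →
      (∀ t ∈ Icc (0 : ℝ) T', ∀ x ∈ Ω,
        tderiv w t x + ((a + b) / 2) * lapl (w t) x = g t x) →
      (∀ x ∈ Ω, w T' x = 0) →
      (∀ t ∈ Icc (0 : ℝ) T', ∀ x ∈ frontier Ω, fderiv ℝ (w t) x (gradient φ x) = 0) →
      eLpNorm (fun z : ℝ × EuclideanSpace ℝ (Fin N) => lapl (w z.1) z.2)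
          (ENNReal.ofReal p) (cylMeasure T' Ω)
        ≤ ENNReal.ofReal C *
          eLpNorm (fun z : ℝ × EuclideanSpace ℝ (Fin N) => g z.1 z.2)
            (ENNReal.ofReal p) (cylMeasure T' Ω))
    (hsmall : C * ((b - a) / 2) < 1)
    (v f : ℝ → EuclideanSpace ℝ (Fin N) → ℝ)
    -- sufficient regularity of the solution
    (hreg : ContDiff ℝ 2 (uncurry v))
    -- the equation `∂ₜ v + M Δ v = f` on `[0,T] × Ω`
    (hpde : ∀ t ∈ Icc (0 : ℝ) T, ∀ x ∈ Ω,
      tderiv v t x + M t x * lapl (v t) x = f t x)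
    -- final condition `v(T,·) = 0`
    (hfinal : ∀ x ∈ Ω, v T x = 0)
    -- homogeneous Neumann boundary condition
    (hbc : ∀ t ∈ Icc (0 : ℝ) T, ∀ x ∈ frontier Ω, fderiv ℝ (v t) x (gradient φ x) = 0) :
    eLpNorm (fun z : ℝ × EuclideanSpace ℝ (Fin N) => lapl (v z.1) z.2)
        (ENNReal.ofReal p) (cylMeasure T Ω)
      ≤ ENNReal.ofReal (C / (1 - C * ((b - a) / 2))) *
        eLpNorm (fun z : ℝ × EuclideanSpace ℝ (Fin N) => f z.1 z.2)
          (ENNReal.ofReal p) (cylMeasure T Ω) := by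
  classical
  set κ : ℝ := (a + b) / 2 with hκ
  set k : ℝ := (b - a) / 2 with hk
  have hk0 : 0 ≤ k := by simp [hk]; linarith
  have hΔcont : Continuous fun z : ℝ × EuclideanSpace ℝ (Fin N) => lapl (v z.1) z.2 :=
    cont_lapl v hreg
  set g : ℝ → EuclideanSpace ℝ (Fin N) → ℝ :=
    fun t x => tderiv v t x + κ * lapl (v t) x with hgdef
  have hgcont : Continuous fun z : ℝ × EuclideanSpace ℝ (Fin N) => g z.1 z.2 :=
    (cont_tderiv v hreg).add (continuous_const.mul hΔcont)
  set μ := cylMeasure T Ω with hμ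
  set q := ENNReal.ofReal p with hq
  have hq1 : 1 ≤ q := by
    rw [hq]; exact ENNReal.one_le_ofReal.mpr hp1.le
  set A := eLpNorm (fun z : ℝ × EuclideanSpace ℝ (Fin N) => lapl (v z.1) z.2) q μ with hA
  set F := eLpNorm (fun z : ℝ × EuclideanSpace ℝ (Fin N) => f z.1 z.2) q μ with hF
  set G := eLpNorm (fun z : ℝ × EuclideanSpace ℝ (Fin N) => g z.1 z.2) q μ with hG
  -- maximal regularity estimate
  have hAG : A ≤ ENNReal.ofReal C * G := by
    exact hmaxreg T hT v g hreg (fun t _ x _ => rfl) hfinal hbc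
  -- the measure is finite
  haveI : IsFiniteMeasure (volume.restrict (Icc (0:ℝ) T)) :=
    ⟨by rw [Measure.restrict_apply_univ]; exact isCompact_Icc.measure_lt_top⟩
  haveI : IsFiniteMeasure (volume.restrict Ω) :=
    ⟨by rw [Measure.restrict_apply_univ]; exact hΩbdd.measure_lt_top⟩
  haveI : IsFiniteMeasure μ := by
    rw [hμ]; unfold cylMeasure; infer_instance
  -- a.e. membership in the cylinder
  have hae : ∀ᵐ z ∂μ, z ∈ (Icc (0:ℝ) T) ×ˢ Ω := by
    rw [hμ]; unfold cylMeasure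
    rw [Measure.prod_restrict]
    exact ae_restrict_mem (measurableSet_Icc.prod hΩopen.measurableSet)
  -- finiteness of A
  have hAfin : A ≠ ∞ := by
    obtain ⟨R, hR⟩ := (isCompact_Icc.prod hΩbdd.isCompact_closure).exists_bound_of_continuousOn
      hΔcont.continuousOn
    have hbd : ∀ᵐ z ∂μ, ‖lapl (v z.1) z.2‖ ≤ R := by
      filter_upwards [hae] with z hz
      exact hR z ⟨hz.1, subset_closure hz.2⟩
    exact ((MemLp.of_bound hΔcont.aestronglyMeasurable R hbd).2).ne
  -- pointwise bound |g| ≤ |f| + k |Δv| on the cylinder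
  have hptwise : ∀ᵐ z ∂μ, |g z.1 z.2| ≤ |f z.1 z.2| + k * |lapl (v z.1) z.2| := by
    filter_upwards [hae] with z hz
    obtain ⟨hzt, hzx⟩ := hz
    have hfz := hpde z.1 hzt z.2 hzx
    have hMz := hM z.1 hzt z.2 hzx
    have : g z.1 z.2 = f z.1 z.2 + (κ - M z.1 z.2) * lapl (v z.1) z.2 := by
      rw [hgdef]; ring_nf; nlinarith [hfz]
    rw [this]
    have habs : |κ - M z.1 z.2| ≤ k := by
      rw [abs_le]; constructor <;> [skip; skip] <;> simp [hκ, hk] <;> linarith [hMz.1, hMz.2]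
    calc |f z.1 z.2 + (κ - M z.1 z.2) * lapl (v z.1) z.2|
        ≤ |f z.1 z.2| + |(κ - M z.1 z.2) * lapl (v z.1) z.2| := abs_add_le _ _
      _ ≤ |f z.1 z.2| + k * |lapl (v z.1) z.2| := by
          rw [abs_mul]
          exact add_le_add_right (mul_le_mul_of_nonneg_right habs (abs_nonneg _)) _
  -- the truncation h
  set h : ℝ × EuclideanSpace ℝ (Fin N) → ℝ :=
    fun z => max (|g z.1 z.2| - k * |lapl (v z.1) z.2|) 0 with hhdef
  have hhcont : Continuous h :=
    ((hgcont.abs.sub (continuous_const.mul hΔcont.abs))).max continuous_const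
  have hGsplit : G ≤ eLpNorm h q μ + ENNReal.ofReal k * A := by
    have step1 : G ≤ eLpNorm (fun z => h z + k * |lapl (v z.1) z.2|) q μ := by
      refine eLpNorm_mono_ae ?_
      filter_upwards with z
      have h1 : |g z.1 z.2| ≤ h z + k * |lapl (v z.1) z.2| := by
        rw [hhdef]
        have := le_max_left (|g z.1 z.2| - k * |lapl (v z.1) z.2|) 0
        simp only []
        linarith
      have h2 : 0 ≤ h z + k * |lapl (v z.1) z.2| := by
        rw [hhdef]; positivity
      rw [Real.norm_eq_abs, Real.norm_eq_abs, abs_of_nonneg h2]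
      exact h1
    have step2 : eLpNorm (fun z => h z + k * |lapl (v z.1) z.2|) q μ
        ≤ eLpNorm h q μ + eLpNorm (fun z => k * |lapl (v z.1) z.2|) q μ :=
      eLpNorm_add_le hhcont.aestronglyMeasurable
        ((continuous_const.mul hΔcont.abs).aestronglyMeasurable) hq1
    have step3 : eLpNorm (fun z => k * |lapl (v z.1) z.2|) q μ = ENNReal.ofReal k * A := by
      have e1 : (fun z : ℝ × EuclideanSpace ℝ (Fin N) => k * |lapl (v z.1) z.2|)
          = fun z => ‖k * lapl (v z.1) z.2‖ := by
        funext z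
        rw [Real.norm_eq_abs, abs_mul, abs_of_nonneg hk0]
      rw [e1, eLpNorm_norm]
      have e2 : (fun z : ℝ × EuclideanSpace ℝ (Fin N) => k * lapl (v z.1) z.2)
          = k • fun z : ℝ × EuclideanSpace ℝ (Fin N) => lapl (v z.1) z.2 := by
        funext z; simp
      rw [e2, eLpNorm_const_smul]
      congr 1
      simp [Real.enorm_eq_ofReal hk0]
    calc G ≤ _ := step1
      _ ≤ _ := step2
      _ = eLpNorm h q μ + ENNReal.ofReal k * A := by rw [step3]
  have hhF : eLpNorm h q μ ≤ F := by
    refine eLpNorm_mono_ae ?_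
    filter_upwards [hptwise] with z hz
    rw [Real.norm_eq_abs, Real.norm_eq_abs]
    have h0 : 0 ≤ h z := by rw [hhdef]; positivity
    rw [abs_of_nonneg h0, hhdef]
    simp only []
    rw [max_le_iff]
    constructor
    · linarith [abs_nonneg (f z.1 z.2)]
    · exact abs_nonneg _
  have hmain : A ≤ ENNReal.ofReal C * (F + ENNReal.ofReal k * A) :=
    hAG.trans (mul_le_mul_right (hGsplit.trans (add_le_add_left hhF _)) _)
  -- final arithmetic
  have hCk : C * k < 1 := hsmall
  have hD : 0 < C / (1 - C * k) := div_pos hC (by linarith)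
  by_cases hFtop : F = ∞
  · rw [hFtop, ENNReal.mul_top]
    · exact le_top
    · exact (ENNReal.ofReal_pos.mpr hD).ne'
  · have hGfin : ENNReal.ofReal C * (F + ENNReal.ofReal k * A) ≠ ∞ := by
      apply ENNReal.mul_ne_top ENNReal.ofReal_ne_top
      exact ENNReal.add_ne_top.mpr ⟨hFtop, ENNReal.mul_ne_top ENNReal.ofReal_ne_top hAfin⟩
    set α := A.toReal with hα
    set β := F.toReal with hβ
    have hαle : α ≤ C * (β + k * α) := by
      have := ENNReal.toReal_mono hGfin hmain
      rwa [ENNReal.toReal_mul, ENNReal.toReal_add hFtop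
        (ENNReal.mul_ne_top ENNReal.ofReal_ne_top hAfin), ENNReal.toReal_mul,
        ENNReal.toReal_ofReal hC.le, ENNReal.toReal_ofReal hk0] at this
    have hαD : α ≤ (C / (1 - C * k)) * β := by
      rw [div_mul_eq_mul_div, le_div_iff₀ (by linarith)]
      nlinarith
    calc A = ENNReal.ofReal α := (ENNReal.ofReal_toReal hAfin).symm
      _ ≤ ENNReal.ofReal ((C / (1 - C * k)) * β) := ENNReal.ofReal_le_ofReal hαD
      _ = ENNReal.ofReal (C / (1 - C * k)) * ENNReal.ofReal β := ENNReal.ofReal_mul hD.le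
      _ = ENNReal.ofReal (C / (1 - C * k)) * F := by
          rw [hβ, ENNReal.ofReal_toReal hFtop]
end
end

section
/- Let N ≥ 1, Q ≥ 3 be an integer, and let (z_k) be the real sequence defined by some z₀ > (1 + N/2)(Q − 1) and the recursion z_{k+1} = z_k/(Q − (2/(N+2))·z_k), as long as z_k < Q(1 + N/2). Then the sequence is strictly increasing ((1 + N/2)(Q−1) < z_k < z_{k+1} for every k with z_k < Q(1+N/2))), and there exists a finite index K such that z_K ≥ Q(1 + N/2). -/
/-- bootstrap-exponent iteration for a nonlinearity of degree
`Q ≥ 3` in dimension `N`.  Let `z : ℕ → ℝ` satisfy `z 0 > (1 + N/2)(Q - 1)` and the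
recursion `z_{k+1} = z_k / (Q - (2/(N+2)) z_k)` as long as `z_k < Q (1 + N/2)`.
Then, as long as the recursion is active, the sequence stays above
`(1 + N/2)(Q - 1)` and is strictly increasing, and some finite index `K` reaches
`z_K ≥ Q (1 + N/2)`. -/
theorem stmt_15 (N Q : ℕ) (hN : 1 ≤ N) (hQ : 3 ≤ Q) (z : ℕ → ℝ)
    (hz0 : (1 + (N : ℝ) / 2) * ((Q : ℝ) - 1) < z 0)
    (hrec : ∀ k : ℕ, z k < (Q : ℝ) * (1 + (N : ℝ) / 2) →
      z (k + 1) = z k / ((Q : ℝ) - (2 / ((N : ℝ) + 2)) * z k)) :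
    (∀ k : ℕ, (∀ j ≤ k, z j < (Q : ℝ) * (1 + (N : ℝ) / 2)) →
      (1 + (N : ℝ) / 2) * ((Q : ℝ) - 1) < z k ∧ z k < z (k + 1)) ∧
    ∃ K : ℕ, (Q : ℝ) * (1 + (N : ℝ) / 2) ≤ z K := by
  have hN1 : (1:ℝ) ≤ N := by exact_mod_cast hN
  have hQ3 : (3:ℝ) ≤ Q := by exact_mod_cast hQ
  set c : ℝ := 1 + (N : ℝ) / 2 with hc_def
  set a : ℝ := 2 / ((N : ℝ) + 2) with ha_def
  have hc : (0:ℝ) < c := by rw [hc_def]; linarith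
  have ha : (0:ℝ) < a := by rw [ha_def]; positivity
  have hac : a * c = 1 := by
    rw [ha_def, hc_def]; field_simp; ring
  have hLpos : (0:ℝ) < c * ((Q:ℝ) - 1) := by nlinarith
  -- step lemma
  have step : ∀ k, c * ((Q:ℝ) - 1) < z k → z k < (Q:ℝ) * c →
      z k < z (k + 1) := by
    intro k h1 h2
    have hrk := hrec k h2
    have hzpos : 0 < z k := hLpos.trans h1
    have hd1 : 0 < (Q:ℝ) - a * z k := by nlinarith
    have hd2 : (Q:ℝ) - a * z k < 1 := by nlinarith
    rw [hrk, lt_div_iff₀ hd1]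
    nlinarith
  have main : ∀ k : ℕ, (∀ j ≤ k, z j < (Q:ℝ) * c) →
      c * ((Q:ℝ) - 1) < z k ∧ z k < z (k + 1) := by
    intro k
    induction k with
    | zero =>
      intro h
      refine ⟨by linarith [hz0], step 0 (by linarith [hz0]) (h 0 le_rfl)⟩
    | succ n ih =>
      intro h
      have hprev := ih (fun j hj => h j (hj.trans (Nat.le_succ n)))
      have h1 : c * ((Q:ℝ) - 1) < z (n + 1) := hprev.1.trans hprev.2
      exact ⟨h1, step (n + 1) h1 (h (n + 1) le_rfl)⟩
  refine ⟨by intro k hk; exact main k (by intro j hj; exact hk j hj), ?_⟩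
  by_contra hcon
  push_neg at hcon
  have hall : ∀ k, c * ((Q:ℝ) - 1) < z k ∧ z k < z (k + 1) :=
    fun k => main k (fun j _ => hcon j)
  have z0pos : 0 < z 0 := hLpos.trans (by linarith [hz0])
  have hmono : ∀ k, z 0 ≤ z k := by
    intro k
    induction k with
    | zero => exact le_rfl
    | succ n ih => exact ih.trans (hall n).2.le
  set d0 : ℝ := (Q:ℝ) - a * z 0 with hd0_def
  have hd0pos : 0 < d0 := by
    have := hcon 0
    rw [hd0_def]; nlinarith
  have hd01 : d0 < 1 := by
    rw [hd0_def]; nlinarith [hz0]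
  have hgrow : ∀ k, z 0 * (1 / d0) ^ k ≤ z k := by
    intro k
    induction k with
    | zero => simp
    | succ n ih =>
      have hzn := hmono n
      have hdn_pos : 0 < (Q:ℝ) - a * z n := by
        have := hcon n; nlinarith
      have hdn_le : (Q:ℝ) - a * z n ≤ d0 := by
        rw [hd0_def]; nlinarith
      have hrn := hrec n (hcon n)
      have h1 : z n / d0 ≤ z n / ((Q:ℝ) - a * z n) := by
        gcongr
        linarith [z0pos]
      have h2 : z 0 * (1 / d0) ^ (n + 1) ≤ z n / d0 := by
        have he : z 0 * (1 / d0) ^ (n + 1) = (z 0 * (1 / d0) ^ n) * (1 / d0) := by ring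
        rw [he, ← mul_one_div (z n) d0]
        exact mul_le_mul_of_nonneg_right ih (by positivity)
      rw [hrn]
      exact h2.trans h1
  obtain ⟨n, hn⟩ := pow_unbounded_of_one_lt ((Q:ℝ) * c / z 0)
    (one_lt_one_div hd0pos hd01)
  have : (Q:ℝ) * c < z n := by
    have h1 := hgrow n
    have h2 : (Q:ℝ) * c < z 0 * (1 / d0) ^ n := by
      rw [div_lt_iff₀ z0pos] at hn
      nlinarith
    exact h2.trans_le h1
  exact absurd (hcon n) (not_lt.mpr this.le)
end

section
/- Let N ≥ 1 and define the sequence (q_n) by a given q₀ with (N+2)/2 < q₀ < N+2 and the recursion q_{n+1} = (1/2)·q_n(N+2)/(N+2−q_n), valid as long as q_n < N+2. Then: (i) whenever (N+2)/2 < q_n < N+2, one has q_{n+1} > q_n; (ii) the ratios q_{n+1}/q_n are strictly increasing in n; and (iii) there exists a finite index n with q_n ≥ N+2. -/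
/-- exponent iteration for the quadratic bootstrap.  Let `N ≥ 1`
and let `q : ℕ → ℝ` satisfy `(N+2)/2 < q 0 < N+2` and the recursion
`q_{n+1} = (1/2) qₙ (N+2)/(N+2-qₙ)` as long as `qₙ < N+2`.  Then
(i) `q_{n+1} > qₙ` whenever `(N+2)/2 < qₙ < N+2`; (ii) the ratios `q_{n+1}/qₙ` are
strictly increasing as long as the recursion is active; and (iii) some finite index
`n` has `qₙ ≥ N+2`. -/
theorem stmt_17 (N : ℕ) (hN : 1 ≤ N) (q : ℕ → ℝ)
    (hq0l : ((N : ℝ) + 2) / 2 < q 0) (hq0u : q 0 < (N : ℝ) + 2)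
    (hrec : ∀ n : ℕ, q n < (N : ℝ) + 2 →
      q (n + 1) = (1 / 2) * (q n * ((N : ℝ) + 2) / ((N : ℝ) + 2 - q n))) :
    (∀ n : ℕ, ((N : ℝ) + 2) / 2 < q n → q n < (N : ℝ) + 2 → q n < q (n + 1)) ∧
    (∀ n : ℕ, (∀ k ≤ n + 1, q k < (N : ℝ) + 2) →
      q (n + 1) / q n < q (n + 2) / q (n + 1)) ∧
    ∃ n : ℕ, (N : ℝ) + 2 ≤ q n := by
  set A : ℝ := (N : ℝ) + 2 with hA
  have hApos : 0 < A := by positivity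
  -- key step lemma
  have step : ∀ x : ℝ, A / 2 < x → x < A → x < (1 / 2) * (x * A / (A - x)) := by
    intro x hl hu
    have hx0 : 0 < x := lt_trans (by positivity) hl
    have hAx : 0 < A - x := by linarith
    have heq : (1:ℝ)/2 * (x * A / (A - x)) = x * A / (2 * (A - x)) := by
      field_simp [hAx.ne']
    rw [heq, lt_div_iff₀ (by linarith)]
    nlinarith
  have part1 : ∀ n : ℕ, A / 2 < q n → q n < A → q n < q (n + 1) := by
    intro n hl hu
    rw [hrec n hu]
    exact step _ hl hu
  -- lower bound propagates
  have hlow : ∀ n : ℕ, (∀ k ≤ n, q k < A) → A / 2 < q n := by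
    intro n
    induction n with
    | zero => intro _; exact hq0l
    | succ m ih =>
      intro h
      have hm : A / 2 < q m := ih (fun k hk => h k (le_trans hk (Nat.le_succ m)))
      have := part1 m hm (h m (Nat.le_succ m))
      linarith
  -- ratio formula
  have ratio : ∀ n : ℕ, A / 2 < q n → q n < A →
      q (n + 1) / q n = A / (2 * (A - q n)) := by
    intro n hl hu
    have hx0 : 0 < q n := lt_trans (by positivity) hl
    have hAx : 0 < A - q n := by linarith
    rw [hrec n hu]
    field_simp
  refine ⟨part1, ?_, ?_⟩
  · intro n h
    have hn : A / 2 < q n := hlow n (fun k hk => h k (le_trans hk (Nat.le_succ n)))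
    have hnu : q n < A := h n (Nat.le_succ n)
    have hn1 : A / 2 < q (n + 1) := hlow (n + 1) h
    have hn1u : q (n + 1) < A := h (n + 1) le_rfl
    rw [ratio n hn hnu, ratio (n + 1) hn1 hn1u]
    have hmono := part1 n hn hnu
    apply div_lt_div_of_pos_left hApos (by linarith) (by linarith)
  · by_contra hc
    push_neg at hc
    have hall : ∀ n, q n < A := hc
    have hlow' : ∀ n, A / 2 < q n := fun n => hlow n (fun k _ => hall k)
    set r : ℝ := A / (2 * (A - q 0)) with hr
    have hA0 : 0 < A - q 0 := by linarith
    have hr1 : 1 < r := by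
      rw [hr, lt_div_iff₀ (by linarith)]
      linarith
    have hq00 : 0 < q 0 := lt_trans (by positivity) hq0l
    have hgrow : ∀ n, q 0 * r ^ n ≤ q n := by
      intro n
      induction n with
      | zero => simp
      | succ m ih =>
        have hq0m : q 0 ≤ q m := by
          calc q 0 = q 0 * 1 := by ring
          _ ≤ q 0 * r ^ m := by
              apply mul_le_mul_of_nonneg_left (one_le_pow₀ hr1.le) hq00.le
          _ ≤ q m := ih
        have hqm0 : 0 < q m := lt_of_lt_of_le hq00 hq0m
        have hAm : 0 < A - q m := by linarith [hall m]
        have hrle : r ≤ A / (2 * (A - q m)) := by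
          rw [hr]
          apply div_le_div_of_nonneg_left hApos.le (by linarith) (by linarith)
        calc q 0 * r ^ (m + 1) = (q 0 * r ^ m) * r := by ring
        _ ≤ q m * r := mul_le_mul_of_nonneg_right ih (by linarith)
        _ ≤ q m * (A / (2 * (A - q m))) := mul_le_mul_of_nonneg_left hrle hqm0.le
        _ = q (m + 1) := by
            rw [hrec m (hall m)]
            field_simp
    obtain ⟨n, hn⟩ := pow_unbounded_of_one_lt (A / q 0) hr1
    have : A < q 0 * r ^ n := by
      rw [div_lt_iff₀ hq00] at hn
      linarith [hn]
    linarith [hgrow n, hall n]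
end
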